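/- Let X̃ = (X−EX)/E|X−EX| and Ỹ = (Y−EY)/E|Y−EY| for non-degenerate integrable X, Y. If ∫_{−∞}^x F_X̃(t) dt ≥ ∫_{−∞}^x F_Ỹ(t) dt for all x ≤ 0 and ∫_x^∞ (1−F_X̃(t)) dt ≤ ∫_x^∞ (1−F_Ỹ(t)) dt for all x ≥ 0, then ∫_{−x}^{x} (F_X̃(t) − F_Ỹ(t)) dt ≤ 0 for all x > 0. -/

import Mathlib

open MeasureTheory Set
open scoped ENNReal

section Aux

variable (P : Measure ℝ) [IsProbabilityMeasure P]

lemma measF : Measurable fun t => P (Iic t) := by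
  have h : Monotone fun t => P (Iic t) := fun a b hab => measure_mono (Iic_subset_Iic.2 hab)
  exact h.measurable

lemma measG : Measurable fun t => P (Ioi t) := by
  have h : Antitone fun t => P (Ioi t) := fun a b hab => measure_mono (Ioi_subset_Ioi hab)
  exact h.measurable

lemma lint_Iic (x : ℝ) :
    ∫⁻ t in Iic x, P (Iic t) = ∫⁻ z, ENNReal.ofReal (x - z) ∂P := by
  have hmeas : Measurable (Function.uncurry fun (t z : ℝ) => (Iic t).indicator
      (fun _ => (1 : ℝ≥0∞)) z) := by
    have he : (Function.uncurry fun (t z : ℝ) => (Iic t).indicator (fun _ => (1 : ℝ≥0∞)) z)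
        = ({q : ℝ × ℝ | q.2 ≤ q.1}).indicator (fun _ => 1) := by
      ext p
      by_cases h : p.2 ≤ p.1 <;> simp [Function.uncurry, Set.indicator, h]
    rw [he]
    exact measurable_const.indicator (measurableSet_le measurable_snd measurable_fst)
  calc ∫⁻ t in Iic x, P (Iic t)
      = ∫⁻ t in Iic x, ∫⁻ z, (Iic t).indicator (fun _ => (1 : ℝ≥0∞)) z ∂P := by
        simp [lintegral_indicator_one measurableSet_Iic]
    _ = ∫⁻ z, (∫⁻ t in Iic x, (Iic t).indicator (fun _ => (1 : ℝ≥0∞)) z) ∂P := by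
        exact lintegral_lintegral_swap (μ := volume.restrict (Iic x)) (ν := P)
          hmeas.aemeasurable
    _ = ∫⁻ z, ENNReal.ofReal (x - z) ∂P := by
        refine lintegral_congr fun z => ?_
        have he : ∀ t, (Iic t).indicator (fun _ => (1 : ℝ≥0∞)) z
            = (Ici z).indicator (fun _ => (1 : ℝ≥0∞)) t := by
          intro t
          by_cases h : z ≤ t <;> simp [Set.indicator, h, mem_Iic, mem_Ici]
        simp_rw [he]
        rw [lintegral_indicator measurableSet_Ici, setLIntegral_one,
          Measure.restrict_apply measurableSet_Ici, Ici_inter_Iic, Real.volume_Icc]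

lemma lint_Ioi (x : ℝ) :
    ∫⁻ t in Ioi x, P (Ioi t) = ∫⁻ z, ENNReal.ofReal (z - x) ∂P := by
  have hmeas : Measurable (Function.uncurry fun (t z : ℝ) => (Ioi t).indicator
      (fun _ => (1 : ℝ≥0∞)) z) := by
    have he : (Function.uncurry fun (t z : ℝ) => (Ioi t).indicator (fun _ => (1 : ℝ≥0∞)) z)
        = ({q : ℝ × ℝ | q.1 < q.2}).indicator (fun _ => 1) := by
      ext p
      by_cases h : p.1 < p.2 <;> simp [Function.uncurry, Set.indicator, h]
    rw [he]
    exact measurable_const.indicator (measurableSet_lt measurable_fst measurable_snd)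
  calc ∫⁻ t in Ioi x, P (Ioi t)
      = ∫⁻ t in Ioi x, ∫⁻ z, (Ioi t).indicator (fun _ => (1 : ℝ≥0∞)) z ∂P := by
        simp [lintegral_indicator_one measurableSet_Ioi]
    _ = ∫⁻ z, (∫⁻ t in Ioi x, (Ioi t).indicator (fun _ => (1 : ℝ≥0∞)) z) ∂P := by
        exact lintegral_lintegral_swap (μ := volume.restrict (Ioi x)) (ν := P)
          hmeas.aemeasurable
    _ = ∫⁻ z, ENNReal.ofReal (z - x) ∂P := by
        refine lintegral_congr fun z => ?_
        have he : ∀ t, (Ioi t).indicator (fun _ => (1 : ℝ≥0∞)) z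
            = (Iio z).indicator (fun _ => (1 : ℝ≥0∞)) t := by
          intro t
          by_cases h : t < z <;> simp [Set.indicator, h, mem_Ioi, mem_Iio]
        simp_rw [he]
        rw [lintegral_indicator measurableSet_Iio, setLIntegral_one,
          Measure.restrict_apply measurableSet_Iio, Iio_inter_Ioi, Real.volume_Ioo]

variable {P}

lemma int_pos_part (hIP : Integrable id P) (x : ℝ) :
    Integrable (fun z => max (x - z) 0) P := by
  have hg : Integrable (fun z : ℝ => |x| + |z|) P := by
    simpa using (integrable_const |x|).add hIP.abs
  refine hg.mono ((continuous_const.sub continuous_id).max continuous_const).aestronglyMeasurable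
    (Filter.Eventually.of_forall fun z => ?_)
  simp only [Real.norm_eq_abs]
  rw [abs_of_nonneg (le_max_right _ _), abs_of_nonneg (by positivity)]
  rcases le_total (x - z) 0 with h | h
  · rw [max_eq_right h]; positivity
  · rw [max_eq_left h]
    have h1 := le_abs_self x; have h2 := neg_le_abs z; linarith

lemma int_pos_part' (hIP : Integrable id P) (x : ℝ) :
    Integrable (fun z => max (z - x) 0) P := by
  have hg : Integrable (fun z : ℝ => |x| + |z|) P := by
    simpa using (integrable_const |x|).add hIP.abs
  refine hg.mono ((continuous_id.sub continuous_const).max continuous_const).aestronglyMeasurable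
    (Filter.Eventually.of_forall fun z => ?_)
  simp only [Real.norm_eq_abs]
  rw [abs_of_nonneg (le_max_right _ _), abs_of_nonneg (by positivity)]
  rcases le_total (z - x) 0 with h | h
  · rw [max_eq_right h]; positivity
  · rw [max_eq_left h]
    have h1 := le_abs_self z; have h2 := neg_le_abs x; linarith

lemma ofReal_eq_max (a : ℝ) : ENNReal.ofReal a = ENNReal.ofReal (max a 0) := by
  rcases le_total a 0 with h | h
  · simp [ENNReal.ofReal_eq_zero.2 h, max_eq_right h]
  · rw [max_eq_left h]

lemma lint_Iic' (hIP : Integrable id P) (x : ℝ) :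
    ∫⁻ t in Iic x, P (Iic t) = ENNReal.ofReal (∫ z, max (x - z) 0 ∂P) := by
  rw [lint_Iic P x,
    show (∫⁻ z, ENNReal.ofReal (x - z) ∂P) = ∫⁻ z, ENNReal.ofReal (max (x - z) 0) ∂P from
      lintegral_congr fun z => ofReal_eq_max _,
    ← ofReal_integral_eq_lintegral_ofReal (int_pos_part hIP x)
    (Filter.Eventually.of_forall fun z => le_max_right _ _)]

lemma lint_Ioi' (hIP : Integrable id P) (x : ℝ) :
    ∫⁻ t in Ioi x, P (Ioi t) = ENNReal.ofReal (∫ z, max (z - x) 0 ∂P) := by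
  rw [lint_Ioi P x,
    show (∫⁻ z, ENNReal.ofReal (z - x) ∂P) = ∫⁻ z, ENNReal.ofReal (max (z - x) 0) ∂P from
      lintegral_congr fun z => ofReal_eq_max _,
    ← ofReal_integral_eq_lintegral_ofReal (int_pos_part' hIP x)
    (Filter.Eventually.of_forall fun z => le_max_right _ _)]

lemma intOn_Iic (hIP : Integrable id P) (x : ℝ) :
    IntegrableOn (fun t => (P (Iic t)).toReal) (Iic x) := by
  refine integrable_toReal_of_lintegral_ne_top ((measF P).aemeasurable) ?_
  rw [lint_Iic' hIP x]
  exact ENNReal.ofReal_ne_top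

lemma intOn_Ioi (hIP : Integrable id P) (x : ℝ) :
    IntegrableOn (fun t => (P (Ioi t)).toReal) (Ioi x) := by
  refine integrable_toReal_of_lintegral_ne_top ((measG P).aemeasurable) ?_
  rw [lint_Ioi' hIP x]
  exact ENNReal.ofReal_ne_top

/-- The key identity: ∫_{Iic x} F = ∫_{Ioi x} (1-F) + x for mean-zero P. -/
lemma key_identity (hIP : Integrable id P) (hmP : ∫ z, z ∂P = 0) (x : ℝ) :
    ∫ t in Iic x, (P (Iic t)).toReal
      = (∫ t in Ioi x, (P (Ioi t)).toReal) + x := by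
  have h1 : ∫ t in Iic x, (P (Iic t)).toReal = ∫ z, max (x - z) 0 ∂P := by
    rw [integral_toReal ((measF P).aemeasurable)
      (Filter.Eventually.of_forall fun t => (measure_lt_top P _)),
      lint_Iic' hIP x, ENNReal.toReal_ofReal]
    exact integral_nonneg fun z => le_max_right _ _
  have h2 : ∫ t in Ioi x, (P (Ioi t)).toReal = ∫ z, max (z - x) 0 ∂P := by
    rw [integral_toReal ((measG P).aemeasurable)
      (Filter.Eventually.of_forall fun t => (measure_lt_top P _)),
      lint_Ioi' hIP x, ENNReal.toReal_ofReal]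
    exact integral_nonneg fun z => le_max_right _ _
  rw [h1, h2]
  have h4 : ∫ z, (max (x - z) 0 - max (z - x) 0) ∂P = ∫ z, (x - z) ∂P := by
    refine integral_congr_ae (Filter.Eventually.of_forall fun z => ?_)
    dsimp only
    rcases le_total (x - z) 0 with h | h
    · rw [max_eq_right h, max_eq_left (by linarith : (0:ℝ) ≤ z - x)]; ring
    · rw [max_eq_left h, max_eq_right (by linarith)]; ring
  have h5 : ∫ z, (x - z) ∂P = x := by
    have hIP' : Integrable (fun z : ℝ => z) P := hIP
    rw [integral_sub (integrable_const x) hIP']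
    simp only [integral_const, measure_univ, probReal_univ, ENNReal.toReal_one, one_smul]
    rw [hmP]; ring
  have h6 := integral_sub (int_pos_part hIP x) (int_pos_part' hIP x)
  rw [h4, h5] at h6
  linarith [h6]

end Aux

/-- for standardized distributions (mean `0`, mean absolute value `1`),
if `∫_{−∞}^x F_X̃ ≥ ∫_{−∞}^x F_Ỹ` for all `x ≤ 0` and
`∫_x^∞ (1−F_X̃) ≤ ∫_x^∞ (1−F_Ỹ)` for all `x ≥ 0` (the s-order), then
`∫_{−x}^{x} (F_X̃ − F_Ỹ) ≤ 0` for all `x > 0` (the ≤_sf order). -/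
theorem s_order_implies_sf_order
    (P Q : Measure ℝ) [IsProbabilityMeasure P] [IsProbabilityMeasure Q]
    (hIP : Integrable id P) (hIQ : Integrable id Q)
    (hmP : ∫ x, x ∂P = 0) (hmQ : ∫ x, x ∂Q = 0)
    (hdP : ∫ x, |x| ∂P = 1) (hdQ : ∫ x, |x| ∂Q = 1)
    (FP FQ : ℝ → ℝ)
    (hFP : ∀ t, FP t = (P (Iic t)).toReal) (hFQ : ∀ t, FQ t = (Q (Iic t)).toReal)
    (hneg : ∀ x : ℝ, x ≤ 0 → ∫ t in Iic x, FQ t ≤ ∫ t in Iic x, FP t)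
    (hpos : ∀ x : ℝ, 0 ≤ x → ∫ t in Ioi x, (1 - FP t) ≤ ∫ t in Ioi x, (1 - FQ t)) :
    ∀ x : ℝ, 0 < x → ∫ t in (-x)..x, (FP t - FQ t) ≤ 0 := by
  intro x hx
  have hFPf : FP = fun t => (P (Iic t)).toReal := funext hFP
  have hFQf : FQ = fun t => (Q (Iic t)).toReal := funext hFQ
  have hcompl : ∀ (R : Measure ℝ), ∀ _ : IsProbabilityMeasure R, ∀ t : ℝ,
      (R (Ioi t)).toReal = 1 - (R (Iic t)).toReal := by
    intro R _ t
    rw [← compl_Iic, measure_compl measurableSet_Iic (measure_ne_top R _), measure_univ,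
      ENNReal.toReal_sub_of_le prob_le_one ENNReal.one_ne_top, ENNReal.toReal_one]
  subst hFPf hFQf
  have iP1 := intOn_Iic hIP x
  have iP2 := intOn_Iic hIP (-x)
  have iQ1 := intOn_Iic hIQ x
  have iQ2 := intOn_Iic hIQ (-x)
  have hsplit : ∫ t in (-x)..x, ((P (Iic t)).toReal - (Q (Iic t)).toReal)
      = ((∫ t in Iic x, (P (Iic t)).toReal) - ∫ t in Iic (-x), (P (Iic t)).toReal)
        - ((∫ t in Iic x, (Q (Iic t)).toReal) - ∫ t in Iic (-x), (Q (Iic t)).toReal) := by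
    rw [← intervalIntegral.integral_Iic_sub_Iic
      (f := fun t => (P (Iic t)).toReal - (Q (Iic t)).toReal) (iP2.sub iQ2) (iP1.sub iQ1)]
    rw [integral_sub iP1 iQ1, integral_sub iP2 iQ2]
    ring
  beta_reduce
  rw [hsplit, key_identity hIP hmP x, key_identity hIQ hmQ x]
  have e1 : ∫ t in Ioi x, (1 - (fun t => (P (Iic t)).toReal) t)
      = ∫ t in Ioi x, (P (Ioi t)).toReal := by
    refine setIntegral_congr_fun measurableSet_Ioi fun t _ => ?_
    rw [hcompl P inferInstance t]
  have e2 : ∫ t in Ioi x, (1 - (fun t => (Q (Iic t)).toReal) t)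
      = ∫ t in Ioi x, (Q (Ioi t)).toReal := by
    refine setIntegral_congr_fun measurableSet_Ioi fun t _ => ?_
    rw [hcompl Q inferInstance t]
  have h1 := hpos x hx.le
  rw [e1, e2] at h1
  have h2 := hneg (-x) (by linarith)
  linarith
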